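/- arXiv:2004.12790 — 4 statements merged into one kernel-verified Lean document; each statement's English description precedes it below -/
import Mathlib

section
/- Let A be a closed, densely defined linear operator on a complex Hilbert space H with 0 ∈ ρ(A). Then for every ε with 0 < ε < 1/‖A⁻¹‖ and for δ = ‖A⁻¹‖²ε/(1 − ‖A⁻¹‖ε), the ε-pseudospectrum satisfies σ_ε(A) ⊂ (B_δ(W(A⁻¹)))⁻¹. -/
open Filter Topology Metric

noncomputable section

variable {H : Type*} [NormedAddCommGroup H] [InnerProductSpace ℂ H] [CompleteSpace H]

/-- `R : H →L[ℂ] H` is a (two-sided, everywhere defined) bounded inverse of `A - lam`,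
i.e. `lam` belongs to the resolvent set of `A` with resolvent `R`. -/
def IsResolventAt (A : H →ₗ.[ℂ] H) (lam : ℂ) (R : H →L[ℂ] H) : Prop :=
  (∀ x : A.domain, R (A x - lam • (x : H)) = (x : H)) ∧
  ∀ y : H, ∃ hy : R y ∈ A.domain, A ⟨R y, hy⟩ - lam • R y = y

/-- The resolvent set `ρ(A)` of a (possibly unbounded) operator `A`. -/
def presolventSet (A : H →ₗ.[ℂ] H) : Set ℂ :=
  {lam | ∃ R, IsResolventAt A lam R}

-- The resolvent operator `(A - lam)⁻¹` (with junk value `0` off the resolvent set).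
open scoped Classical in
def resolventOf (A : H →ₗ.[ℂ] H) (lam : ℂ) : H →L[ℂ] H :=
  if h : ∃ R, IsResolventAt A lam R then h.choose else 0

/-- The `ε`-pseudospectrum `σ_ε(A) = {λ : ‖(A-λ)⁻¹‖ > 1/ε}`, where `‖(A-λ)⁻¹‖` is
understood as `∞` for `λ` in the spectrum. -/
def pseudoSpectrum (ε : ℝ) (A : H →ₗ.[ℂ] H) : Set ℂ :=
  {lam | lam ∉ presolventSet A ∨ 1 / ε < ‖resolventOf A lam‖}

/-- The numerical range `W(T) = {⟨T x, x⟩ : ‖x‖ = 1}` of a bounded operator `T`;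
`⟨T x, x⟩` (inner product linear in the first argument) is written as
`inner x (T x)` in the mathlib convention. -/
def numRange (T : H →L[ℂ] H) : Set ℂ :=
  {z | ∃ x : H, ‖x‖ = 1 ∧ z = (inner ℂ x (T x) : ℂ)}

/-- The numerical range of a (possibly unbounded) operator. -/
def pnumRange (A : H →ₗ.[ℂ] H) : Set ℂ :=
  {z | ∃ x : A.domain, ‖(x : H)‖ = 1 ∧ z = (inner ℂ (x : H) (A x) : ℂ)}

/-- The numerical radius of a bounded operator. -/
def nradius (T : H →L[ℂ] H) : ℝ :=
  sSup ((fun z : ℂ => ‖z‖) '' numRange T)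

/-- The numerical range of a bounded operator on a subspace `U` of `H`. -/
def numRangeSub {U : Submodule ℂ H} (T : U →L[ℂ] U) : Set ℂ :=
  {z | ∃ x : U, ‖(x : H)‖ = 1 ∧ z = (inner ℂ (x : H) ((T x : U) : H) : ℂ)}

/-- `B_δ(U) = {z : dist (z, U) < δ}`, the `δ`-neighborhood of a set `U ⊆ ℂ`. -/
def nbhdSet (δ : ℝ) (U : Set ℂ) : Set ℂ :=
  {z | ∃ u ∈ U, dist z u < δ}

/-- `U⁻¹ = {z⁻¹ : z ∈ U \ {0}}`. -/
def invSet (U : Set ℂ) : Set ℂ :=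
  {z | ∃ u ∈ U, u ≠ 0 ∧ z = u⁻¹}

/-- `U + s = {z + s : z ∈ U}`. -/
def shiftSet (U : Set ℂ) (s : ℂ) : Set ℂ :=
  {z | ∃ u ∈ U, z = u + s}

lemma isResolventAt_unique (A : H →ₗ.[ℂ] H) (lam : ℂ) (R₁ R₂ : H →L[ℂ] H)
    (h₁ : IsResolventAt A lam R₁) (h₂ : IsResolventAt A lam R₂) : R₁ = R₂ := by
  ext y
  obtain ⟨hy, hAy⟩ := h₂.2 y
  have h := h₁.1 ⟨R₂ y, hy⟩
  rw [show ((⟨R₂ y, hy⟩ : A.domain) : H) = R₂ y from rfl] at h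
  rw [hAy] at h
  exact h

lemma resolventOf_eq (A : H →ₗ.[ℂ] H) (lam : ℂ) (S : H →L[ℂ] H)
    (h : IsResolventAt A lam S) : resolventOf A lam = S := by
  have hex : ∃ R, IsResolventAt A lam R := ⟨S, h⟩
  unfold resolventOf
  rw [dif_pos hex]
  exact isResolventAt_unique A lam _ S hex.choose_spec h

/-- Proposition 2.2. -/
theorem pseudospectrum_subset_inv_nbhd_numRange
    (A : H →ₗ.[ℂ] H)
    (hclosed : IsClosed (A.graph : Set (H × H)))
    (hdense : Dense (A.domain : Set H))
    (h0 : (0 : ℂ) ∈ presolventSet A)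
    (ε : ℝ) (hε0 : 0 < ε) (hε : ε < 1 / ‖resolventOf A 0‖)
    (δ : ℝ)
    (hδ : δ = ‖resolventOf A 0‖ ^ 2 * ε / (1 - ‖resolventOf A 0‖ * ε)) :
    pseudoSpectrum ε A ⊆ invSet (nbhdSet δ (numRange (resolventOf A 0))) := by
  obtain ⟨R, hR⟩ := h0
  have hReq : resolventOf A 0 = R := resolventOf_eq A 0 R hR
  rw [hReq] at hε hδ ⊢
  -- basic positivity facts
  have hr : 0 < ‖R‖ := by
    rcases (norm_nonneg R).lt_or_eq with h | h
    · exact h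
    · rw [← h, div_zero] at hε; linarith
  have hre : ‖R‖ * ε < 1 := by
    rw [lt_div_iff₀ hr] at hε; linarith [hε]
  have hδ0 : 0 < δ := by
    rw [hδ]
    apply div_pos (by positivity)
    linarith
  have hδkey : δ * (1 - ‖R‖ * ε) = ‖R‖ ^ 2 * ε := by
    rw [hδ, div_mul_cancel₀ _ (by linarith : (1:ℝ) - ‖R‖ * ε ≠ 0)]
  -- main argument
  intro lam hlam
  by_contra hmem
  have hlam0 : lam ≠ 0 := by
    rintro rfl
    rcases hlam with h | h
    · exact h ⟨R, hR⟩
    · rw [hReq] at h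
      have h3 : ‖R‖ < 1 / ε := by rw [lt_div_iff₀ hε0]; linarith
      linarith
  set μ := lam⁻¹ with hμdef
  have hμ0 : μ ≠ 0 := inv_ne_zero hlam0
  have hfar : ∀ w ∈ numRange R, δ ≤ dist μ w := by
    intro w hw
    by_contra hcon
    push_neg at hcon
    exact hmem ⟨μ, ⟨w, hw, hcon⟩, hμ0, (inv_inv lam).symm⟩
  set d : ℝ := max δ (‖μ‖ - ‖R‖) with hd
  have hd0 : 0 < d := lt_of_lt_of_le hδ0 (le_max_left _ _)
  set T : H →L[ℂ] H := R - μ • ContinuousLinearMap.id ℂ H with hT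
  have hTapp : ∀ x : H, T x = R x - μ • x := by
    intro x; simp [hT]
  -- the inner product identity for unit vectors
  have hip : ∀ y : H, ‖y‖ = 1 → (inner ℂ y (T y) : ℂ) = (inner ℂ y (R y) : ℂ) - μ := by
    intro y hy
    rw [hTapp, inner_sub_right, inner_smul_right, inner_self_eq_norm_sq_to_K, hy]
    push_cast
    ring
  -- normalized vectors
  have hunit : ∀ x : H, x ≠ 0 → ‖((‖x‖⁻¹ : ℂ) • x : H)‖ = 1 := by
    intro x hx
    have hc : 0 < ‖x‖ := norm_pos_iff.mpr hx
    rw [norm_smul]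
    simp only [norm_inv, Complex.norm_real, Real.norm_eq_abs, abs_norm]
    field_simp
  -- the lower bound d * ‖x‖ ≤ ‖T x‖
  have hlow : ∀ x : H, d * ‖x‖ ≤ ‖T x‖ := by
    intro x
    rcases eq_or_ne x 0 with rfl | hx
    · simp
    have hc : 0 < ‖x‖ := norm_pos_iff.mpr hx
    have hb2 : (‖μ‖ - ‖R‖) * ‖x‖ ≤ ‖T x‖ := by
      have h1 : ‖T x‖ = ‖μ • x - R x‖ := by rw [hTapp, norm_sub_rev]
      have h2 : ‖μ • x‖ - ‖R x‖ ≤ ‖μ • x - R x‖ := norm_sub_norm_le _ _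
      have h3 : ‖R x‖ ≤ ‖R‖ * ‖x‖ := R.le_opNorm x
      have h4 : ‖μ • x‖ = ‖μ‖ * ‖x‖ := norm_smul _ _
      rw [h1]
      nlinarith
    have hb1 : δ * ‖x‖ ≤ ‖T x‖ := by
      set y : H := (‖x‖⁻¹ : ℂ) • x with hy
      have hynorm : ‖y‖ = 1 := hunit x hx
      have hw : (inner ℂ y (R y) : ℂ) ∈ numRange R := ⟨y, hynorm, rfl⟩
      have hdist := hfar _ hw
      have h5 : δ ≤ ‖(inner ℂ y (T y) : ℂ)‖ := by
        rw [hip y hynorm]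
        calc δ ≤ dist μ (inner ℂ y (R y) : ℂ) := hdist
          _ = ‖μ - (inner ℂ y (R y) : ℂ)‖ := by rw [dist_eq_norm]
          _ = ‖(inner ℂ y (R y) : ℂ) - μ‖ := norm_sub_rev _ _
      have h6 : ‖(inner ℂ y (T y) : ℂ)‖ ≤ ‖y‖ * ‖T y‖ := norm_inner_le_norm _ _
      rw [hynorm, one_mul] at h6
      have h7 : ‖T y‖ = ‖x‖⁻¹ * ‖T x‖ := by
        rw [hy, map_smul, norm_smul]
        simp only [norm_inv, Complex.norm_real, Real.norm_eq_abs, abs_norm]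
      rw [h7] at h6
      have h8 : δ ≤ ‖x‖⁻¹ * ‖T x‖ := le_trans h5 h6
      calc δ * ‖x‖ ≤ (‖x‖⁻¹ * ‖T x‖) * ‖x‖ := by nlinarith
        _ = ‖T x‖ := by field_simp
    rcases le_total δ (‖μ‖ - ‖R‖) with h | h
    · rw [hd, max_eq_right h]; exact hb2
    · rw [hd, max_eq_left h]; exact hb1
  -- T is injective with closed range
  have hanti : AntilipschitzWith (⟨d⁻¹, by positivity⟩ : NNReal) T := by
    apply T.antilipschitz_of_bound
    intro x
    have h := hlow x
    have hdd : d * d⁻¹ = 1 := mul_inv_cancel₀ hd0.ne'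
    show ‖x‖ ≤ d⁻¹ * ‖T x‖
    nlinarith [norm_nonneg (T x)]
  have hinj : Function.Injective T := hanti.injective
  have hclosedRange : IsClosed (Set.range T) := hanti.isClosed_range T.uniformContinuous
  -- T is surjective
  set K : Submodule ℂ H := LinearMap.range (T : H →ₗ[ℂ] H) with hK
  haveI : CompleteSpace K := by
    have : IsClosed (K : Set H) := by
      rw [hK, LinearMap.coe_range]; exact hclosedRange
    exact this.completeSpace_coe
  have hKtop : K = ⊤ := by
    by_contra hKne
    have hbot : Kᗮ ≠ ⊥ := fun hbot' => hKne (Submodule.orthogonal_eq_bot_iff.mp hbot')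
    obtain ⟨x, hxK, hx0⟩ := Submodule.exists_mem_ne_zero_of_ne_bot hbot
    set y : H := (‖x‖⁻¹ : ℂ) • x with hy
    have hyK : y ∈ Kᗮ := Kᗮ.smul_mem _ hxK
    have hynorm : ‖y‖ = 1 := hunit x hx0
    have hTy : T y ∈ K := LinearMap.mem_range.mpr ⟨y, rfl⟩
    have h0' : (inner ℂ y (T y) : ℂ) = 0 := (Submodule.mem_orthogonal' K y).mp hyK _ hTy
    rw [hip y hynorm] at h0'
    have hμw : μ = (inner ℂ y (R y) : ℂ) := by
      have := sub_eq_zero.mp h0'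
      exact this.symm
    have := hfar _ ⟨y, hynorm, rfl⟩
    rw [← hμw, dist_self] at this
    linarith
  have hsurj : Function.Surjective T := LinearMap.range_eq_top.mp hKtop
  -- invert T
  set e : H ≃ₗ[ℂ] H := LinearEquiv.ofBijective (T : H →ₗ[ℂ] H) ⟨hinj, hsurj⟩ with he
  have hTinvbound : ∀ y : H, ‖(e.symm : H →ₗ[ℂ] H) y‖ ≤ d⁻¹ * ‖y‖ := by
    intro y
    show ‖e.symm y‖ ≤ d⁻¹ * ‖y‖
    have h1 : T (e.symm y) = y := e.apply_symm_apply y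
    have h2 := hlow (e.symm y)
    rw [h1] at h2
    have h3 := mul_le_mul_of_nonneg_left h2 (inv_nonneg.2 hd0.le)
    rwa [← mul_assoc, inv_mul_cancel₀ hd0.ne', one_mul] at h3
  set Tinv : H →L[ℂ] H := LinearMap.mkContinuous (e.symm : H →ₗ[ℂ] H) d⁻¹ hTinvbound
    with hTinvdef
  have hTinvApp : ∀ y : H, Tinv y = e.symm y := fun y => rfl
  have hTT : ∀ y : H, T (Tinv y) = y := by
    intro y
    rw [hTinvApp]
    exact e.apply_symm_apply y
  have hTinvT : ∀ x : H, Tinv (T x) = x := by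
    intro x
    rw [hTinvApp]
    exact e.symm_apply_apply x
  have hTinvNorm : ∀ y : H, ‖Tinv y‖ ≤ d⁻¹ * ‖y‖ := fun y => hTinvbound y
  -- T commutes with R, hence so does Tinv
  have hcomm : ∀ z : H, T (R z) = R (T z) := by
    intro z
    rw [hTapp, hTapp, map_sub, map_smul]
  have hRTinv : ∀ y : H, R (Tinv y) = Tinv (R y) := by
    intro y
    conv_rhs => rw [← hTT y]
    rw [← hcomm, hTinvT]
  -- the resolvent candidate at lam
  set S : H →L[ℂ] H := (-μ) • (R.comp Tinv) with hS
  have hSapp : ∀ y : H, S y = (-μ) • R (Tinv y) := fun y => rfl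
  have hlamμ : lam * μ = 1 := mul_inv_cancel₀ hlam0
  have hR1 : ∀ x : A.domain, R (A x) = (x : H) := by
    intro x
    have := hR.1 x
    simpa using this
  have hSres : IsResolventAt A lam S := by
    constructor
    · intro x
      rw [hSapp, hRTinv]
      have h1 : R ((A x : H) - lam • (x : H)) = (x : H) - lam • R (x : H) := by
        rw [map_sub, map_smul, hR1]
      have h2 : (x : H) - lam • R (x : H) = (-lam) • T (x : H) := by
        rw [hTapp, smul_sub, smul_smul, neg_mul, hlamμ, neg_smul, neg_smul, one_smul,
          sub_neg_eq_add]
        abel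
      rw [h1, h2, map_smul, hTinvT, smul_smul]
      rw [show (-μ) * (-lam) = lam * μ by ring, hlamμ, one_smul]
    · intro y
      obtain ⟨hz, hAz⟩ := hR.2 (Tinv y)
      have hAz' : A ⟨R (Tinv y), hz⟩ = Tinv y := by simpa using hAz
      have hmemd : S y ∈ A.domain := by
        rw [hSapp]; exact A.domain.smul_mem _ hz
      refine ⟨hmemd, ?_⟩
      have hsm : (⟨S y, hmemd⟩ : A.domain) = (-μ) • (⟨R (Tinv y), hz⟩ : A.domain) := by
        apply Subtype.ext
        rw [Submodule.coe_smul]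
        exact hSapp y
      have hAS : A ⟨S y, hmemd⟩ = (-μ) • (Tinv y) := by
        rw [hsm, A.map_smul, hAz']
      rw [hAS, hSapp]
      have hTy : R (Tinv y) - μ • Tinv y = y := by
        have := hTT y
        rw [hTapp] at this
        exact this
      have hsub : R (Tinv y) = y + μ • Tinv y := eq_add_of_sub_eq hTy
      rw [hsub]
      have hμμ : lam • ((-μ : ℂ) • (y + μ • Tinv y)) = -(y + μ • Tinv y) := by
        rw [smul_smul, show lam * -μ = -(lam * μ) by ring, hlamμ, neg_smul, one_smul]
      rw [hμμ, neg_smul, sub_neg_eq_add]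
      abel
  -- identify the resolvent and bound its norm
  have hlamres : lam ∈ presolventSet A := ⟨S, hSres⟩
  have hreseq : resolventOf A lam = S := resolventOf_eq A lam S hSres
  have hSnorm : ‖S‖ ≤ 1 / ε := by
    have hcoef : ‖μ‖ * ‖R‖ * ε ≤ d := by
      rcases le_total (‖μ‖) (‖R‖ + δ) with h | h
      · have h1 : ‖μ‖ * ‖R‖ * ε ≤ (‖R‖ + δ) * ‖R‖ * ε := by nlinarith [norm_nonneg μ]
        have h2 : (‖R‖ + δ) * ‖R‖ * ε ≤ δ := by nlinarith [hδkey]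
        exact le_trans (le_trans h1 h2) (le_max_left _ _)
      · have h1 : ‖μ‖ * ‖R‖ * ε ≤ ‖μ‖ - ‖R‖ := by nlinarith [hδkey]
        exact le_trans h1 (le_max_right _ _)
    apply ContinuousLinearMap.opNorm_le_bound _ (by positivity)
    intro y
    rw [hSapp, norm_smul, norm_neg]
    have h1 : ‖R (Tinv y)‖ ≤ ‖R‖ * (d⁻¹ * ‖y‖) :=
      le_trans (R.le_opNorm _) (mul_le_mul_of_nonneg_left (hTinvNorm y) (norm_nonneg R))
    have h2 : ‖μ‖ * ‖R (Tinv y)‖ ≤ ‖μ‖ * (‖R‖ * (d⁻¹ * ‖y‖)) :=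
      mul_le_mul_of_nonneg_left h1 (norm_nonneg μ)
    refine le_trans h2 ?_
    have h3 : ‖μ‖ * (‖R‖ * (d⁻¹ * ‖y‖)) = (‖μ‖ * ‖R‖ * d⁻¹) * ‖y‖ := by ring
    rw [h3]
    have h4 : ‖μ‖ * ‖R‖ * d⁻¹ ≤ 1 / ε := by
      rw [div_eq_mul_inv, one_mul]
      have h5 : ‖μ‖ * ‖R‖ * ε ≤ d := hcoef
      have h6 : ‖μ‖ * ‖R‖ ≤ d * ε⁻¹ := by
        have := mul_le_mul_of_nonneg_right h5 (le_of_lt (inv_pos.mpr hε0))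
        rw [mul_assoc, mul_inv_cancel₀ hε0.ne', mul_one] at this
        exact this
      calc ‖μ‖ * ‖R‖ * d⁻¹ ≤ (d * ε⁻¹) * d⁻¹ :=
            mul_le_mul_of_nonneg_right h6 (inv_nonneg.2 hd0.le)
        _ = ε⁻¹ := by
            rw [mul_comm d ε⁻¹, mul_assoc, mul_inv_cancel₀ hd0.ne', mul_one]
    calc ‖μ‖ * ‖R‖ * d⁻¹ * ‖y‖ ≤ (1 / ε) * ‖y‖ :=
          mul_le_mul_of_nonneg_right h4 (norm_nonneg y)
      _ = 1 / ε * ‖y‖ := rfl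
  rcases hlam with h | h
  · exact h hlamres
  · rw [hreseq] at h
    linarith
end
end

section
/- Let A be a closed, densely defined linear operator on a complex Hilbert space H and let S ⊂ ρ(A) be such that M := sup_{s∈S} ‖(A−s)⁻¹‖ < ∞. Then for every ε with 0 < ε < 1/M and with δ_s = ‖(A−s)⁻¹‖²ε/(1 − ‖(A−s)⁻¹‖ε) for each s ∈ S, one has σ_ε(A) ⊂ ⋂_{s∈S} [ (B_{δ_s}(W((A−s)⁻¹)))⁻¹ + s ]. -/
open Filter Topology Metric

noncomputable section

variable {H : Type*} [NormedAddCommGroup H] [InnerProductSpace ℂ H] [CompleteSpace H]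

set_option linter.unusedSectionVars false
set_option maxHeartbeats 1000000

lemma isResolventAt_resolventOf {A : H →ₗ.[ℂ] H} {lam : ℂ}
    (h : lam ∈ presolventSet A) : IsResolventAt A lam (resolventOf A lam) := by
  have h' : ∃ R, IsResolventAt A lam R := h
  rw [resolventOf, dif_pos h']
  exact h'.choose_spec

lemma resolvent_inj {A : H →ₗ.[ℂ] H} {lam : ℂ} {R : H →L[ℂ] H}
    (hR : IsResolventAt A lam R) {y : H} (hy : R y = 0) : y = 0 := by
  obtain ⟨hmem, heq⟩ := hR.2 y
  have h0 : (⟨R y, hmem⟩ : A.domain) = 0 := Subtype.ext hy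
  rw [← heq, h0, hy]
  simp [LinearPMap.map_zero]

lemma resolvent_norm_pos {A : H →ₗ.[ℂ] H} {lam : ℂ} {R : H →L[ℂ] H}
    (hR : IsResolventAt A lam R) [Nontrivial H] : 0 < ‖R‖ := by
  obtain ⟨y, hy⟩ := exists_ne (0 : H)
  have : R y ≠ 0 := fun h => hy (resolvent_inj hR h)
  have hRne : R ≠ 0 := fun h => this (by rw [h]; rfl)
  exact norm_pos_iff.mpr hRne

set_option linter.unusedSectionVars false

lemma mem_presolvent_of_far {A : H →ₗ.[ℂ] H} {s lam : ℂ} {R : H →L[ℂ] H}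
    (hR : IsResolventAt A s R) (hne : lam ≠ s) {δ : ℝ} (hδ : 0 < δ)
    (hfar : ∀ x : H, ‖x‖ = 1 → δ ≤ ‖(inner ℂ x (R x) : ℂ) - (lam - s)⁻¹‖) :
    lam ∈ presolventSet A := by
  set μ : ℂ := (lam - s)⁻¹ with hμdef
  have hls : lam - s ≠ 0 := sub_ne_zero.mpr hne
  have hμ : μ ≠ 0 := inv_ne_zero hls
  have hμinv : μ⁻¹ = lam - s := inv_inv _
  set T : H →L[ℂ] H := R - μ • ContinuousLinearMap.id ℂ H with hTdef
  have hTapp : ∀ x : H, T x = R x - μ • x := fun x => rfl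
  -- lower bound on |⟨x, T x⟩|
  have hinlow : ∀ x : H, δ * (‖x‖ * ‖x‖) ≤ ‖(inner ℂ x (T x) : ℂ)‖ := by
    intro x
    rcases eq_or_ne x 0 with rfl | hx
    · simp
    · set c : ℂ := (‖x‖ : ℂ) with hc
      have hcnorm : ‖c‖ = ‖x‖ := by simp [hc]
      have hc0 : c ≠ 0 := by
        simp [hc, Complex.ofReal_ne_zero, norm_ne_zero_iff, hx]
      set u : H := c⁻¹ • x with hu
      have hunorm : ‖u‖ = 1 := by
        rw [hu, norm_smul, norm_inv, hcnorm]
        field_simp [norm_ne_zero_iff.mpr hx]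
      have hinner_u : (inner ℂ u (T u) : ℂ) = (inner ℂ u (R u) : ℂ) - μ := by
        have h1 : (inner ℂ u (μ • u) : ℂ) = μ * (inner ℂ u u : ℂ) := inner_smul_right _ _ _
        have h2 : (inner ℂ u u : ℂ) = 1 := by
          rw [inner_self_eq_norm_sq_to_K, hunorm]; norm_num
        rw [hTapp, inner_sub_right, h1, h2, mul_one]
      have hfu : δ ≤ ‖(inner ℂ u (T u) : ℂ)‖ := by
        rw [hinner_u]; exact hfar u hunorm
      have hscale : (inner ℂ u (T u) : ℂ) = (starRingEnd ℂ c)⁻¹ * c⁻¹ * (inner ℂ x (T x) : ℂ) := by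
        rw [hu, map_smul, inner_smul_left, inner_smul_right, map_inv₀]
        ring
      have hconj : ‖(starRingEnd ℂ c)⁻¹ * c⁻¹‖ = (‖x‖ * ‖x‖)⁻¹ := by
        rw [norm_mul, norm_inv, norm_inv, RCLike.norm_conj, hcnorm, mul_inv]
      have hxpos : 0 < ‖x‖ * ‖x‖ := mul_pos (norm_pos_iff.mpr hx) (norm_pos_iff.mpr hx)
      have := hfu
      rw [hscale, norm_mul, hconj] at this
      calc δ * (‖x‖ * ‖x‖) ≤ ((‖x‖ * ‖x‖)⁻¹ * ‖(inner ℂ x (T x) : ℂ)‖) * (‖x‖ * ‖x‖) := by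
            exact mul_le_mul_of_nonneg_right this (le_of_lt hxpos)
        _ = ‖(inner ℂ x (T x) : ℂ)‖ := by field_simp
  -- T is bounded below
  have hlow : ∀ x : H, δ * ‖x‖ ≤ ‖T x‖ := by
    intro x
    rcases eq_or_ne x 0 with rfl | hx
    · simp
    · have h1 := hinlow x
      have h2 : ‖(inner ℂ x (T x) : ℂ)‖ ≤ ‖x‖ * ‖T x‖ := norm_inner_le_norm _ _
      have hxpos : 0 < ‖x‖ := norm_pos_iff.mpr hx
      nlinarith
  -- T injective
  have hker : LinearMap.ker (T : H →ₗ[ℂ] H) = ⊥ := by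
    rw [LinearMap.ker_eq_bot']
    intro x hx
    by_contra h
    have hxpos : 0 < ‖x‖ := norm_pos_iff.mpr h
    have h1 := hlow x
    rw [show T x = 0 from hx, norm_zero] at h1
    nlinarith
  -- T has closed range
  have hanti : AntilipschitzWith ⟨δ⁻¹, le_of_lt (inv_pos.mpr hδ)⟩ T := by
    apply ContinuousLinearMap.antilipschitz_of_bound
    intro x
    show ‖x‖ ≤ δ⁻¹ * ‖T x‖
    calc ‖x‖ = δ⁻¹ * (δ * ‖x‖) := by field_simp
      _ ≤ δ⁻¹ * ‖T x‖ :=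
          mul_le_mul_of_nonneg_left (hlow x) (le_of_lt (inv_pos.mpr hδ))
  have hclosedrange : IsClosed (LinearMap.range (T : H →ₗ[ℂ] H) : Set H) := by
    have : IsClosed (Set.range T) := (hanti.isClosedEmbedding T.uniformContinuous).isClosed_range
    simpa [LinearMap.coe_range] using this
  -- T surjective
  have hrange : LinearMap.range (T : H →ₗ[ℂ] H) = ⊤ := by
    haveI : CompleteSpace (LinearMap.range (T : H →ₗ[ℂ] H)) := hclosedrange.completeSpace_coe
    rw [← Submodule.orthogonal_eq_bot_iff, Submodule.eq_bot_iff]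
    intro y hy
    have h1 : (inner ℂ (T y) y : ℂ) = 0 := hy (T y) ⟨y, rfl⟩
    have h2 : (inner ℂ y (T y) : ℂ) = 0 := by
      rw [← inner_conj_symm, h1, map_zero]
    have h3 := hinlow y
    rw [h2, norm_zero] at h3
    by_contra hy0
    have hy1 : 0 < ‖y‖ := norm_pos_iff.mpr hy0
    nlinarith [mul_pos hδ (mul_pos hy1 hy1)]
  set e := ContinuousLinearEquiv.ofBijective T hker hrange with he
  have hecoe : ∀ x : H, e x = T x := fun x => rfl
  have hTsymm : ∀ y : H, T (e.symm y) = y := by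
    intro y
    rw [← hecoe]; exact e.apply_symm_apply y
  have hcomm : ∀ z : H, T (R z) = R (T z) := by
    intro z
    simp only [hTapp, map_sub, map_smul]
  have hsymmR : ∀ y : H, e.symm (R y) = R (e.symm y) := by
    intro y
    apply e.injective
    rw [e.apply_symm_apply, hecoe, hcomm, hTsymm]
  have hμmul : μ * (lam - s) = 1 := inv_mul_cancel₀ hls
  set Rlam : H →L[ℂ] H := (-μ) • (R.comp (e.symm : H →L[ℂ] H)) with hRlam
  have hRlamapp : ∀ y : H, Rlam y = (-μ) • R (e.symm y) := fun y => rfl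
  refine ⟨Rlam, ?_, ?_⟩
  · -- left inverse on the domain
    intro x
    have hx1 : R (A x - s • (x : H)) = (x : H) := hR.1 x
    have hRw : R (A x - lam • (x : H)) = (x : H) + (s - lam) • R x := by
      have hw : A x - lam • (x : H) = (A x - s • (x : H)) + (s - lam) • (x : H) := by
        module
      rw [hw, map_add, map_smul, hx1]
    have hkey : e.symm (R (A x - lam • (x : H))) = (-(lam - s)) • (x : H) := by
      rw [e.symm_apply_eq, hecoe, hTapp, map_smul, hRw]
      match_scalars <;> (try simp only [hμdef]) <;> first
        | (field_simp [hls]; try ring)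
        | ring
    rw [hRlamapp, ← hsymmR, hkey]
    match_scalars <;> (try simp only [hμdef]) <;> first
        | (field_simp [hls]; try ring)
        | ring
  · -- right inverse
    intro y
    obtain ⟨hz, hzeq⟩ := hR.2 (e.symm y)
    have hzR : R (e.symm y) = y + μ • (e.symm y) := by
      have h := hTsymm y
      rw [hTapp] at h
      exact sub_eq_iff_eq_add.mp h
    have hmem : Rlam y ∈ A.domain := by
      rw [hRlamapp]
      exact A.domain.smul_mem _ hz
    refine ⟨hmem, ?_⟩
    have hsub : (⟨Rlam y, hmem⟩ : A.domain) = (-μ) • (⟨R (e.symm y), hz⟩ : A.domain) :=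
      Subtype.ext (hRlamapp y)
    rw [hsub, A.map_smul]
    have hAz : A ⟨R (e.symm y), hz⟩ = (e.symm y) + s • R (e.symm y) :=
      sub_eq_iff_eq_add.mp hzeq
    rw [hAz, hRlamapp, hzR]
    match_scalars <;> (try simp only [hμdef]) <;> first
        | (field_simp [hls]; try ring)
        | ring


/-- Theorem 2.3. -/
theorem pseudospectrum_subset_iInter_shifted
    (A : H →ₗ.[ℂ] H)
    (hclosed : IsClosed (A.graph : Set (H × H)))
    (hdense : Dense (A.domain : Set H))
    (S : Set ℂ) (hS : S ⊆ presolventSet A)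
    (hbdd : BddAbove ((fun s => ‖resolventOf A s‖) '' S))
    (ε : ℝ) (hε0 : 0 < ε)
    (hε : ε < 1 / sSup ((fun s => ‖resolventOf A s‖) '' S)) :
    pseudoSpectrum ε A ⊆
      ⋂ s ∈ S,
        shiftSet
          (invSet (nbhdSet
            (‖resolventOf A s‖ ^ 2 * ε / (1 - ‖resolventOf A s‖ * ε))
            (numRange (resolventOf A s)))) s := by
  intro lam hlam
  simp only [Set.mem_iInter]
  intro s hs
  set R := resolventOf A s with hRdef
  have hsres : IsResolventAt A s R := isResolventAt_resolventOf (hS hs)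
  set M := sSup ((fun s => ‖resolventOf A s‖) '' S) with hMdef
  have hrM : ‖R‖ ≤ M := le_csSup hbdd ⟨s, hs, rfl⟩
  set δ : ℝ := ‖R‖ ^ 2 * ε / (1 - ‖R‖ * ε) with hδdef
  -- it suffices to find a point of the numerical range close to (lam - s)⁻¹
  suffices hsuff : lam ≠ s ∧ ∃ u ∈ numRange R, dist (lam - s)⁻¹ u < δ by
    obtain ⟨hne, u, hu, hdu⟩ := hsuff
    exact ⟨lam - s, ⟨(lam - s)⁻¹, ⟨u, hu, hdu⟩,
      inv_ne_zero (sub_ne_zero.mpr hne), (inv_inv _).symm⟩, by ring⟩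
  cases hlam with
  | inl h1 =>
    -- lam is in the spectrum
    have hnt : Nontrivial H := by
      by_contra hcon
      have hsub : Subsingleton H := not_nontrivial_iff_subsingleton.mp hcon
      exact h1 ⟨0, fun x => Subsingleton.elim _ _,
        fun y => ⟨by simp, Subsingleton.elim _ _⟩⟩
    have hr : 0 < ‖R‖ := resolvent_norm_pos hsres
    have hM : 0 < M := lt_of_lt_of_le hr hrM
    have hεM : ε * M < 1 := (lt_div_iff₀ hM).mp hε
    have hrε : ‖R‖ * ε < 1 := by nlinarith
    have hδpos : 0 < δ := by
      rw [hδdef]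
      apply div_pos (by positivity) (by linarith)
    have hne : lam ≠ s := fun h => h1 (h ▸ hS hs)
    refine ⟨hne, ?_⟩
    by_contra hcon
    push_neg at hcon
    refine h1 (mem_presolvent_of_far hsres hne hδpos ?_)
    intro x hx
    have := hcon (inner ℂ x (R x)) ⟨x, hx, rfl⟩
    rwa [dist_eq_norm, norm_sub_rev] at this
  | inr h2 =>
    set Rlam := resolventOf A lam with hRlamdef
    have hlampres : lam ∈ presolventSet A := by
      by_contra h
      have h' : ¬ ∃ R', IsResolventAt A lam R' := h
      rw [hRlamdef, resolventOf, dif_neg h', norm_zero] at h2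
      have : 0 < 1 / ε := by positivity
      linarith
    have hlamres : IsResolventAt A lam Rlam := isResolventAt_resolventOf hlampres
    have hRlamne : Rlam ≠ 0 := by
      intro h
      rw [h, norm_zero] at h2
      have : 0 < 1 / ε := by positivity
      linarith
    have hnt : Nontrivial H := by
      obtain ⟨a, ha⟩ := DFunLike.ne_iff.mp hRlamne
      exact nontrivial_of_ne (Rlam a) 0 (by simpa using ha)
    have hr : 0 < ‖R‖ := resolvent_norm_pos hsres
    have hM : 0 < M := lt_of_lt_of_le hr hrM
    have hεM : ε * M < 1 := (lt_div_iff₀ hM).mp hε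
    have hrε : ‖R‖ * ε < 1 := by nlinarith
    have hδpos : 0 < δ := by
      rw [hδdef]
      apply div_pos (by positivity) (by linarith)
    have hne : lam ≠ s := by
      intro h
      rw [hRlamdef, h, ← hRdef] at h2
      have : M < 1 / ε := by
        rw [lt_div_iff₀ hε0]
        nlinarith
      linarith
    refine ⟨hne, ?_⟩
    have hls : lam - s ≠ 0 := sub_ne_zero.mpr hne
    set μ : ℂ := (lam - s)⁻¹ with hμdef
    have hμmul : μ * (lam - s) = 1 := inv_mul_cancel₀ hls
    set c : ℝ := ‖lam - s‖ with hcdef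
    have hcpos : 0 < c := norm_pos_iff.mpr hls
    have hμnorm : ‖μ‖ = c⁻¹ := by rw [hμdef, norm_inv]
    -- resolvent identity bound
    have hres_id : ∀ y : H, Rlam y = R y + (lam - s) • Rlam (R y) := by
      intro y
      obtain ⟨hy, hyeq⟩ := hsres.2 y
      have h := hlamres.1 ⟨R y, hy⟩
      have hyeq' : A ⟨R y, hy⟩ = y + s • R y := sub_eq_iff_eq_add.mp hyeq
      have hw : A ⟨R y, hy⟩ - lam • (R y) = y - (lam - s) • R y := by
        rw [hyeq']; module
      rw [hw, map_sub, map_smul] at h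
      exact sub_eq_iff_eq_add.mp h
    have hbound : ‖Rlam‖ ≤ ‖R‖ + c * ‖R‖ * ‖Rlam‖ := by
      apply ContinuousLinearMap.opNorm_le_bound
      · positivity
      · intro y
        rw [hres_id y]
        calc ‖R y + (lam - s) • Rlam (R y)‖
            ≤ ‖R y‖ + ‖(lam - s) • Rlam (R y)‖ := norm_add_le _ _
          _ = ‖R y‖ + c * ‖Rlam (R y)‖ := by rw [norm_smul, hcdef]
          _ ≤ ‖R‖ * ‖y‖ + c * (‖Rlam‖ * (‖R‖ * ‖y‖)) := by
              have h1 := R.le_opNorm y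
              have h2 : ‖Rlam (R y)‖ ≤ ‖Rlam‖ * ‖R y‖ := Rlam.le_opNorm (R y)
              have h3 : ‖Rlam‖ * ‖R y‖ ≤ ‖Rlam‖ * (‖R‖ * ‖y‖) :=
                mul_le_mul_of_nonneg_left h1 (norm_nonneg _)
              nlinarith [norm_nonneg (Rlam (R y)), hcpos.le]
          _ = (‖R‖ + c * ‖R‖ * ‖Rlam‖) * ‖y‖ := by ring
    -- lower bound on |lam - s|
    have hc_lower : (1 - ‖R‖ * ε) / ‖R‖ < c := by
      by_contra hcon
      push_neg at hcon
      have h4 : c * ‖R‖ ≤ 1 - ‖R‖ * ε := (le_div_iff₀ hr).mp hcon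
      have h5 : ‖Rlam‖ ≤ ‖R‖ + (1 - ‖R‖ * ε) * ‖Rlam‖ := by
        have : c * ‖R‖ * ‖Rlam‖ ≤ (1 - ‖R‖ * ε) * ‖Rlam‖ :=
          mul_le_mul_of_nonneg_right h4 (norm_nonneg _)
        linarith
      have h6 : ‖Rlam‖ * (‖R‖ * ε) ≤ ‖R‖ := by nlinarith
      have h7 : ‖Rlam‖ ≤ 1 / ε := by
        rw [le_div_iff₀ hε0]
        nlinarith
      linarith
    -- find an almost-maximizing vector
    have hex : ∃ y : H, 1 / ε * ‖y‖ < ‖Rlam y‖ := by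
      by_contra hcon
      push_neg at hcon
      have : ‖Rlam‖ ≤ 1 / ε :=
        ContinuousLinearMap.opNorm_le_bound _ (by positivity) fun y => hcon y
      linarith
    obtain ⟨y, hy⟩ := hex
    set v : H := Rlam y with hvdef
    have hy0 : y ≠ 0 := by
      intro hyy
      rw [hvdef, hyy, map_zero, norm_zero] at hy
      simp at hy
    have hypos : 0 < ‖y‖ := norm_pos_iff.mpr hy0
    have hvpos : 0 < ‖v‖ := by
      have : 0 < 1 / ε * ‖y‖ := by positivity
      linarith
    obtain ⟨hv, hveq⟩ := hlamres.2 y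
    have hveq' : A ⟨v, hv⟩ = y + lam • v := sub_eq_iff_eq_add.mp hveq
    have h := hsres.1 ⟨v, hv⟩
    have hw : A ⟨v, hv⟩ - s • v = y + (lam - s) • v := by rw [hveq']; module
    rw [hw, map_add, map_smul] at h
    have h' : R y + (lam - s) • R v = v := h
    have h5 : (lam - s) • R v = v - R y := by
      rw [eq_sub_iff_add_eq, add_comm]
      exact h'
    have hRv : R v = μ • v - μ • R y := by
      have h6 := congrArg (fun w => μ • w) h5
      rw [smul_smul, hμmul, one_smul, smul_sub] at h6
      rw [h6]
    -- the unit vector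
    set cv : ℂ := (‖v‖ : ℂ) with hcvdef
    have hcv0 : cv ≠ 0 := by
      rw [hcvdef]
      exact Complex.ofReal_ne_zero.mpr (ne_of_gt hvpos)
    set u : H := cv⁻¹ • v with hudef
    have hunorm : ‖u‖ = 1 := by
      rw [hudef, norm_smul, norm_inv, hcvdef]
      simp [Complex.norm_real, abs_of_pos hvpos]
      field_simp
    refine ⟨inner ℂ u (R u), ⟨u, hunorm, rfl⟩, ?_⟩
    -- compute inner ℂ u (R u)
    have hinner_v : (inner ℂ v (R v) : ℂ) = μ * (‖v‖ : ℂ) ^ 2 - μ * (inner ℂ v (R y) : ℂ) := by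
      rw [hRv, inner_sub_right, inner_smul_right, inner_smul_right,
        inner_self_eq_norm_sq_to_K]
      norm_num
    have hinner_u : (inner ℂ u (R u) : ℂ) = (starRingEnd ℂ cv)⁻¹ * cv⁻¹ * (inner ℂ v (R v) : ℂ) := by
      rw [hudef, map_smul, inner_smul_left, inner_smul_right, map_inv₀]
      ring
    have hconjcv : (starRingEnd ℂ cv) = cv := by
      rw [hcvdef, Complex.conj_ofReal]
    have hcv2 : cv * cv = (‖v‖ : ℂ) ^ 2 := by rw [hcvdef]; ring
    have hdiff : (inner ℂ u (R u) : ℂ) - μ = -(μ * (cv * cv)⁻¹ * (inner ℂ v (R y) : ℂ)) := by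
      rw [hinner_u, hconjcv, hinner_v, hcv2]
      have hvne : ((‖v‖ : ℂ)^2) ≠ 0 :=
        pow_ne_zero _ (Complex.ofReal_ne_zero.mpr (ne_of_gt hvpos))
      rw [hcvdef]
      field_simp [Complex.ofReal_ne_zero.mpr (ne_of_gt hvpos)]
      ring
    rw [dist_eq_norm, norm_sub_rev, hdiff]
    rw [norm_neg, norm_mul, norm_mul, norm_inv, norm_inv]
    have hnormcv2 : ‖cv * cv‖ = ‖v‖ * ‖v‖ := by
      rw [norm_mul, hcvdef]
      simp [Complex.norm_real, abs_of_pos hvpos]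
    rw [hnormcv2]
    -- now a purely real estimate
    have hinnerRy : ‖(inner ℂ v (R y) : ℂ)‖ ≤ ‖v‖ * (‖R‖ * ‖y‖) := by
      calc ‖(inner ℂ v (R y) : ℂ)‖ ≤ ‖v‖ * ‖R y‖ := norm_inner_le_norm _ _
        _ ≤ ‖v‖ * (‖R‖ * ‖y‖) := mul_le_mul_of_nonneg_left (R.le_opNorm y) (norm_nonneg _)
    have hyv : ‖y‖ < ε * ‖v‖ := by
      have := hy
      rw [div_mul_eq_mul_div, div_lt_iff₀ hε0] at this
      nlinarith
    have hstep1 : c⁻¹ * (‖v‖ * ‖v‖)⁻¹ * ‖(inner ℂ v (R y) : ℂ)‖ ≤ c⁻¹ * (‖R‖ * (‖y‖ / ‖v‖)) := by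
      have hpos : (0:ℝ) < ‖v‖ * ‖v‖ := by positivity
      have : (‖v‖ * ‖v‖)⁻¹ * ‖(inner ℂ v (R y) : ℂ)‖ ≤ ‖R‖ * (‖y‖ / ‖v‖) := by
        rw [inv_mul_le_iff₀ hpos]
        calc ‖(inner ℂ v (R y) : ℂ)‖ ≤ ‖v‖ * (‖R‖ * ‖y‖) := hinnerRy
          _ = ‖v‖ * ‖v‖ * (‖R‖ * (‖y‖ / ‖v‖)) := by field_simp
      calc c⁻¹ * (‖v‖ * ‖v‖)⁻¹ * ‖(inner ℂ v (R y) : ℂ)‖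
          = c⁻¹ * ((‖v‖ * ‖v‖)⁻¹ * ‖(inner ℂ v (R y) : ℂ)‖) := by ring
        _ ≤ c⁻¹ * (‖R‖ * (‖y‖ / ‖v‖)) := mul_le_mul_of_nonneg_left this (by positivity)
    have hstep2 : c⁻¹ * (‖R‖ * (‖y‖ / ‖v‖)) < c⁻¹ * (‖R‖ * ε) := by
      apply mul_lt_mul_of_pos_left _ (by positivity)
      apply mul_lt_mul_of_pos_left _ hr
      rw [div_lt_iff₀ hvpos]
      nlinarith
    have hstep3 : c⁻¹ * (‖R‖ * ε) < δ := by
      rw [hδdef, lt_div_iff₀ (by linarith : (0:ℝ) < 1 - ‖R‖ * ε)]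
      have hinv : c⁻¹ * (1 - ‖R‖ * ε) < ‖R‖ := by
        have h8 : (1 - ‖R‖ * ε) / ‖R‖ * c⁻¹ < c * c⁻¹ :=
          mul_lt_mul_of_pos_right hc_lower (by positivity)
        rw [mul_inv_cancel₀ (ne_of_gt hcpos)] at h8
        have h9 : (1 - ‖R‖ * ε) / ‖R‖ * c⁻¹ = c⁻¹ * (1 - ‖R‖ * ε) / ‖R‖ := by ring
        rw [h9, div_lt_one hr] at h8
        linarith
      calc c⁻¹ * (‖R‖ * ε) * (1 - ‖R‖ * ε) = (c⁻¹ * (1 - ‖R‖ * ε)) * (‖R‖ * ε) := by ring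
        _ < ‖R‖ * (‖R‖ * ε) := by
            apply mul_lt_mul_of_pos_right hinv (by positivity)
        _ = ‖R‖ ^ 2 * ε := by ring
    calc c⁻¹ * (‖v‖ * ‖v‖)⁻¹ * ‖(inner ℂ v (R y) : ℂ)‖
        ≤ c⁻¹ * (‖R‖ * (‖y‖ / ‖v‖)) := hstep1
      _ < c⁻¹ * (‖R‖ * ε) := hstep2
      _ < δ := hstep3
end
end

section
/- Let A be a closed, densely defined linear operator on a complex Hilbert space H. For s ∈ ρ(A), 0 < ε < 1/‖(A−s)⁻¹‖, δ_s = ‖(A−s)⁻¹‖²ε/(1 − ‖(A−s)⁻¹‖ε) and ρ_s = 1/(w((A−s)⁻¹) + δ_s), the closed ball of radius ρ_s centered at s is disjoint from the set (B_{δ_s}(W((A−s)⁻¹)))⁻¹ + s; moreover ρ_s ≥ 1/(‖(A−s)⁻¹‖ + δ_s). -/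
open Filter Topology Metric

noncomputable section

variable {H : Type*} [NormedAddCommGroup H] [InnerProductSpace ℂ H] [CompleteSpace H]

/-- Proposition 2.5. -/
theorem closedBall_disjoint_shifted_inv_nbhd_numRange
    (A : H →ₗ.[ℂ] H)
    (hclosed : IsClosed (A.graph : Set (H × H)))
    (hdense : Dense (A.domain : Set H))
    (s : ℂ) (hs : s ∈ presolventSet A)
    (ε : ℝ) (hε0 : 0 < ε) (hε : ε < 1 / ‖resolventOf A s‖)
    (δ : ℝ)
    (hδ : δ = ‖resolventOf A s‖ ^ 2 * ε / (1 - ‖resolventOf A s‖ * ε))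
    (ρ : ℝ) (hρ : ρ = 1 / (nradius (resolventOf A s) + δ)) :
    Metric.closedBall s ρ ∩
        shiftSet (invSet (nbhdSet δ (numRange (resolventOf A s)))) s = ∅ ∧
      1 / (‖resolventOf A s‖ + δ) ≤ ρ := by
  set R := resolventOf A s with hR
  have hr0 : 0 < ‖R‖ := by
    rcases lt_or_eq_of_le (norm_nonneg R) with h | h
    · exact h
    · exfalso; rw [← h] at hε; simp at hε; linarith
  have hrε : ‖R‖ * ε < 1 := by
    rw [lt_div_iff₀ hr0] at hε
    linarith
  have hδ0 : 0 < δ := by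
    rw [hδ]; apply div_pos
    · positivity
    · linarith
  obtain ⟨x, hx⟩ : ∃ x : H, ‖x‖ = 1 := by
    have hRne : R ≠ 0 := by
      intro h; rw [h] at hr0; simp at hr0
    have : ∃ y : H, R y ≠ 0 := by
      by_contra h; push_neg at h
      exact hRne (ContinuousLinearMap.ext fun y => by simp [h y])
    obtain ⟨y, hy⟩ := this
    have hy0 : y ≠ 0 := fun h => hy (by simp [h])
    refine ⟨‖y‖⁻¹ • y, ?_⟩
    rw [norm_smul, norm_inv, norm_norm]
    exact inv_mul_cancel₀ (norm_ne_zero_iff.mpr hy0)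
  have hmem_le : ∀ z ∈ numRange R, ‖z‖ ≤ ‖R‖ := by
    rintro z ⟨u, hu1, rfl⟩
    calc ‖inner ℂ u (R u)‖ = ‖(inner ℂ u (R u) : ℂ)‖ := rfl
      _ ≤ ‖u‖ * ‖R u‖ := norm_inner_le_norm u (R u)
      _ ≤ ‖u‖ * (‖R‖ * ‖u‖) := by gcongr; exact R.le_opNorm u
      _ = ‖R‖ := by rw [hu1]; ring
  have hbdd : BddAbove ((fun z : ℂ => ‖z‖) '' numRange R) :=
    ⟨‖R‖, by rintro a ⟨z, hz, rfl⟩; exact hmem_le z hz⟩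
  have hw_le : nradius R ≤ ‖R‖ :=
    Real.sSup_le (by rintro a ⟨z, hz, rfl⟩; exact hmem_le z hz) (norm_nonneg R)
  have hw0 : 0 ≤ nradius R := by
    have hmem : ‖inner ℂ x (R x)‖ ∈ (fun z : ℂ => ‖z‖) '' numRange R :=
      ⟨_, ⟨x, hx, rfl⟩, rfl⟩
    exact le_trans (norm_nonneg _) (le_csSup hbdd hmem)
  have hwδ : 0 < nradius R + δ := by linarith
  constructor
  · ext z
    simp only [Set.mem_inter_iff, Set.mem_empty_iff_false, iff_false]
    rintro ⟨hz1, u, ⟨v, hv, hv0, rfl⟩, rfl⟩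
    obtain ⟨m, hm, hdm⟩ := hv
    have hav : 0 < ‖v‖ := norm_pos_iff.mpr hv0
    have h1 : ‖v‖⁻¹ ≤ ρ := by
      have := Metric.mem_closedBall.mp hz1
      rwa [Complex.dist_eq, add_sub_cancel_right, norm_inv] at this
    have h2 : nradius R + δ ≤ ‖v‖ := by
      rw [hρ, one_div] at h1
      nlinarith [mul_inv_cancel₀ (ne_of_gt hav), mul_inv_cancel₀ (ne_of_gt hwδ),
        mul_pos hav hwδ, inv_pos.mpr hwδ]
    have hmle : ‖m‖ ≤ nradius R := le_csSup hbdd ⟨m, hm, rfl⟩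
    have h3 : ‖v‖ < nradius R + δ := by
      have : ‖v‖ ≤ ‖m‖ + ‖v - m‖ := by
        calc ‖v‖ = ‖m + (v - m)‖ := by ring_nf
          _ ≤ ‖m‖ + ‖v - m‖ := norm_add_le _ _
      rw [Complex.dist_eq] at hdm
      linarith
    linarith
  · rw [hρ]
    apply one_div_le_one_div_of_le hwδ
    linarith
end
end

section
/- Let A be a closed, densely defined linear operator on a complex Hilbert space H with 0 ∈ ρ(A), and suppose the family (P_n, A_n)_{n∈ℕ} approximates A strongly. Then for every x ∈ H with ‖x‖ = 1 there exists a sequence y_n ∈ U_n with ‖y_n‖ = 1 (defined for all sufficiently large n) such that ⟨A_n⁻¹ y_n, y_n⟩ → ⟨A⁻¹ x, x⟩. -/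
open Filter Topology Metric

noncomputable section

variable {H : Type*} [NormedAddCommGroup H] [InnerProductSpace ℂ H] [CompleteSpace H]

/-- Lemma 3.4(a). -/
theorem numRange_inv_pointwise_approx
    (A : H →ₗ.[ℂ] H)
    (hclosed : IsClosed (A.graph : Set (H × H)))
    (hdense : Dense (A.domain : Set H))
    (h0 : (0 : ℂ) ∈ presolventSet A)
    (U : ℕ → Submodule ℂ H) (hUfin : ∀ n, FiniteDimensional ℂ (U n))
    (P : ℕ → H →L[ℂ] H)
    (hPmem : ∀ n x, P n x ∈ U n)
    (hPproj : ∀ n, ∀ x ∈ U n, P n x = x)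
    (hPconv : ∀ x : H, Tendsto (fun n => P n x) atTop (𝓝 x))
    (T : ∀ n, ↥(U n) →L[ℂ] ↥(U n)) (Tinv : ∀ n, ↥(U n) →L[ℂ] ↥(U n))
    (hTinv : ∀ n, (∀ u, Tinv n (T n u) = u) ∧ ∀ u, T n (Tinv n u) = u)
    (happrox : ∀ x : H,
      Tendsto (fun n => (↑(Tinv n ⟨P n x, hPmem n x⟩) : H)) atTop
        (𝓝 (resolventOf A 0 x)))
    :
    ∀ x : H, ‖x‖ = 1 →
      ∃ (N : ℕ) (y : ∀ n, ↥(U n)),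
        (∀ n ≥ N, ‖((y n : U n) : H)‖ = 1) ∧
          Tendsto (fun n => (inner ℂ ((y n : U n) : H) (↑(Tinv n (y n)) : H) : ℂ))
            atTop (𝓝 (inner ℂ x (resolventOf A 0 x) : ℂ)) := by
  intro x hx
  have hP := hPconv x
  have hnorm : Tendsto (fun n => ‖P n x‖) atTop (𝓝 1) := by
    simpa [hx] using hP.norm
  have hev : ∀ᶠ n in atTop, (1 : ℝ) / 2 < ‖P n x‖ :=
    hnorm.eventually (eventually_gt_nhds (by norm_num))
  obtain ⟨N, hN⟩ := eventually_atTop.mp hev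
  refine ⟨N, fun n => ((‖P n x‖ : ℂ))⁻¹ • (⟨P n x, hPmem n x⟩ : U n), ?_, ?_⟩
  · intro n hn
    have hpos : (0 : ℝ) < ‖P n x‖ := lt_trans (by norm_num) (hN n hn)
    have hne : ‖P n x‖ ≠ 0 := ne_of_gt hpos
    simp only [Submodule.coe_smul, norm_smul, norm_inv, Complex.norm_real,
      Real.norm_eq_abs, abs_of_pos hpos]
    exact inv_mul_cancel₀ hne
  · have hg : Tendsto
        (fun n => (inner ℂ (P n x) (↑(Tinv n ⟨P n x, hPmem n x⟩) : H) : ℂ))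
        atTop (𝓝 (inner ℂ x (resolventOf A 0 x) : ℂ)) :=
      hP.inner (happrox x)
    have hc : Tendsto (fun n => ((‖P n x‖ : ℂ))⁻¹) atTop (𝓝 1) := by
      have : Tendsto (fun n => ((‖P n x‖ : ℝ) : ℂ)) atTop (𝓝 (1 : ℂ)) := by
        exact (Complex.continuous_ofReal.continuousAt.tendsto.comp hnorm)
      simpa using this.inv₀ one_ne_zero
    have key : ∀ n, (inner ℂ (↑(((‖P n x‖ : ℂ))⁻¹ • (⟨P n x, hPmem n x⟩ : U n)) : H)
        (↑(Tinv n (((‖P n x‖ : ℂ))⁻¹ • (⟨P n x, hPmem n x⟩ : U n))) : H) : ℂ)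
        = ((‖P n x‖ : ℂ))⁻¹ * (((‖P n x‖ : ℂ))⁻¹ *
          (inner ℂ (P n x) (↑(Tinv n ⟨P n x, hPmem n x⟩) : H) : ℂ)) := by
      intro n
      rw [map_smul]
      simp only [Submodule.coe_smul, inner_smul_left, inner_smul_right,
        map_inv₀, Complex.conj_ofReal]
    simp only [key]
    have := (hc.mul (hc.mul hg))
    simpa using this
end
end
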